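/- Let d ≥ 4. Define C, D : [0,1]^2 × [0,1]^{d−2} → [0,1] by C(u,v) := max{u_1 + u_2 − 1, 0}·∏_{i=1}^{d−2} v_i and D(u,v) := max{u_1 + u_2 − 1, 0}·min{v_1,...,v_{d−2}}. Then C and D are d-dimensional copulas, D is Kendall-countermonotonic, and C ⪯ D with C ≠ D; in particular, D is a Kendall-countermonotonic copula that is not a minimal copula. -/

import Mathlib

open MeasureTheory unitInterval

/-- The unit cube `[0,1]^d`, modelled as functions `Fin d → [0,1]`. -/
abbrev Cube (d : ℕ) : Type := Fin d → unitInterval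

/-- `η_K(u,v)`: the vector whose `k`-th coordinate is `v k` if `k ∈ K` and `u k` otherwise. -/
def etaK {d : ℕ} (K : Finset (Fin d)) (u v : Cube d) : Cube d :=
  fun k => if k ∈ K then v k else u k

/-- `C` is a `d`-dimensional copula. -/
def IsCopula {d : ℕ} (C : Cube d → ℝ) : Prop :=
  (∀ u v : Cube d, u ≤ v →
      0 ≤ ∑ K : Finset (Fin d), (-1 : ℝ) ^ (d - K.card) * C (etaK K u v)) ∧
  (∀ k : Fin d, ∀ u : Cube d, C (etaK {k} u 0) = 0) ∧
  (∀ k : Fin d, ∀ u : Cube d, C (etaK {k} 1 u) = (u k : ℝ))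

/-- The reflection `ν_K`, i.e. the composition of the commuting reflections `ν_k`, `k ∈ K`,
written in closed (inclusion–exclusion) form: the coordinates in `L ⊆ K` are reflected to
`1 - u k`, the remaining coordinates of `K` are set to `1`. -/
noncomputable def nuK {d : ℕ} (K : Finset (Fin d)) (C : Cube d → ℝ) : Cube d → ℝ :=
  fun u => ∑ L ∈ K.powerset, (-1 : ℝ) ^ L.card *
    C (fun k => if k ∈ L then unitInterval.symm (u k) else if k ∈ K then 1 else u k)

/-- The total reflection `τ = ν_{{1,...,d}}`, sending a copula to its survival copula. -/
noncomputable def survival {d : ℕ} (C : Cube d → ℝ) : Cube d → ℝ := nuK Finset.univ C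

/-- The concordance order `C ⪯ D`: `C(u) ≤ D(u)` and `(τ C)(u) ≤ (τ D)(u)` for all `u`. -/
def ConcLE {d : ℕ} (C D : Cube d → ℝ) : Prop :=
  (∀ u, C u ≤ D u) ∧ (∀ u, survival C u ≤ survival D u)

/-- A minimal copula: a minimal element of the set of all copulas w.r.t. concordance order. -/
def IsMinimalCopula {d : ℕ} (C : Cube d → ℝ) : Prop :=
  IsCopula C ∧ ∀ D : Cube d → ℝ, IsCopula D → ConcLE D C → D = C

/-- `μ` is the copula measure `Q^C` of `C`: a Borel probability measure on the cube
with `μ [0,u] = C u` for all `u`. -/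
def IsCopulaMeasure {d : ℕ} (C : Cube d → ℝ) (μ : Measure (Cube d)) : Prop :=
  IsProbabilityMeasure μ ∧ ∀ u : Cube d, μ (Set.Icc 0 u) = ENNReal.ofReal (C u)

/-- `C` is `K`-countermonotonic: there are strictly increasing continuous functions
`g k : [0,1] → ℝ` (`k ∈ K`) and `c : ℝ` with `Q^C {u : ∑ k ∈ K, g k (u k) = c} = 1`. -/
def IsKCM {d : ℕ} (K : Finset (Fin d)) (C : Cube d → ℝ) : Prop :=
  ∃ (g : Fin d → unitInterval → ℝ) (c : ℝ),
    (∀ k ∈ K, StrictMono (g k) ∧ Continuous (g k)) ∧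
    ∃ μ : Measure (Cube d), IsCopulaMeasure C μ ∧
      μ {u : Cube d | ∑ k ∈ K, g k (u k) = c} = 1

/-- `C` is Kendall-countermonotonic (`τ`-CM):
`min (C u) ((τ C)(1 - u)) = 0` for every `u` with `0 < u < 1` coordinatewise. -/
noncomputable def IsTauCM {d : ℕ} (C : Cube d → ℝ) : Prop :=
  ∀ u : Cube d, (∀ k, 0 < u k ∧ u k < 1) →
    min (C u) (survival C (fun k => unitInterval.symm (u k))) = 0

/-- The upper Fréchet–Hoeffding bound `M(u) = min {u_1, ..., u_d}`. -/
noncomputable def Mcop {d : ℕ} : Cube d → ℝ :=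
  fun u => sInf (Set.range fun k => (u k : ℝ))

namespace Aux9
variable {d : ℕ}

noncomputable def W2 (a b : ℝ) : ℝ := max (a + b - 1) 0

noncomputable def cmin (c : ℝ) (T : Finset (Fin d)) (w : Cube d) : ℝ :=
  T.fold min c (fun k => (w k : ℝ))

noncomputable def cmax (T : Finset (Fin d)) (w : Cube d) : ℝ :=
  T.fold max 0 (fun k => (w k : ℝ))

def cprod (T : Finset (Fin d)) (w : Cube d) : ℝ := ∏ k ∈ T, (w k : ℝ)

lemma cmin_empty (c : ℝ) (w : Cube d) : cmin c ∅ w = c := rfl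

lemma cmin_insert {a : Fin d} {T : Finset (Fin d)} (ha : a ∉ T) (c : ℝ) (w : Cube d) :
    cmin c (insert a T) w = min (w a : ℝ) (cmin c T w) := Finset.fold_insert ha

lemma cmax_insert {a : Fin d} {T : Finset (Fin d)} (ha : a ∉ T) (w : Cube d) :
    cmax (insert a T) w = max (w a : ℝ) (cmax T w) := Finset.fold_insert ha

lemma cmin_congr {c : ℝ} {T : Finset (Fin d)} {w w' : Cube d}
    (h : ∀ k ∈ T, w k = w' k) : cmin c T w = cmin c T w' :=
  Finset.fold_congr (fun k hk => by rw [h k hk])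

lemma cprod_congr {T : Finset (Fin d)} {w w' : Cube d}
    (h : ∀ k ∈ T, w k = w' k) : cprod T w = cprod T w' :=
  Finset.prod_congr rfl (fun k hk => by rw [h k hk])

lemma min_cmin (a c : ℝ) (T : Finset (Fin d)) (w : Cube d) :
    min a (cmin c T w) = cmin (min a c) T w := by
  induction T using Finset.induction with
  | empty => rfl
  | insert _ _ ha ih =>
    rw [cmin_insert ha, cmin_insert ha, min_left_comm, ih]

lemma cmin_le_init (c : ℝ) (T : Finset (Fin d)) (w : Cube d) : cmin c T w ≤ c := by
  induction T using Finset.induction with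
  | empty => exact le_rfl
  | insert _ _ ha ih => rw [cmin_insert ha]; exact le_trans (min_le_right _ _) ih

lemma cmin_le {c : ℝ} {T : Finset (Fin d)} {w : Cube d} {k : Fin d} (hk : k ∈ T) :
    cmin c T w ≤ (w k : ℝ) := by
  induction T using Finset.induction with
  | empty => simp at hk
  | @insert a T ha ih =>
    rw [cmin_insert ha]
    rcases Finset.mem_insert.1 hk with h | h
    · subst h; exact min_le_left _ _
    · exact le_trans (min_le_right _ _) (ih h)

lemma le_cmin {b c : ℝ} {T : Finset (Fin d)} {w : Cube d} (hb : b ≤ c)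
    (h : ∀ k ∈ T, b ≤ (w k : ℝ)) : b ≤ cmin c T w := by
  induction T using Finset.induction with
  | empty => exact hb
  | @insert a T ha ih =>
    rw [cmin_insert ha]
    exact le_min (h a (Finset.mem_insert_self a T))
      (ih (fun k hk => h k (Finset.mem_insert_of_mem hk)))

lemma cmin_nonneg {c : ℝ} (hc : 0 ≤ c) (T : Finset (Fin d)) (w : Cube d) :
    0 ≤ cmin c T w := le_cmin hc (fun k _ => (w k).2.1)

lemma cprod_nonneg (T : Finset (Fin d)) (w : Cube d) : 0 ≤ cprod T w :=
  Finset.prod_nonneg (fun k _ => (w k).2.1)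

lemma cprod_le_one (T : Finset (Fin d)) (w : Cube d) : cprod T w ≤ 1 :=
  Finset.prod_le_one (fun k _ => (w k).2.1) (fun k _ => (w k).2.2)

lemma cprod_le_cmin (T : Finset (Fin d)) (w : Cube d) : cprod T w ≤ cmin 1 T w := by
  induction T using Finset.induction with
  | empty => exact le_rfl
  | @insert a T ha ih =>
    rw [cmin_insert ha]
    have h1 : cprod (insert a T) w = (w a : ℝ) * cprod T w := Finset.prod_insert ha
    rw [h1]
    refine le_min ?_ ?_
    · calc (w a : ℝ) * cprod T w ≤ (w a : ℝ) * 1 :=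
        mul_le_mul_of_nonneg_left (cprod_le_one T w) (w a).2.1
      _ = (w a : ℝ) := mul_one _
    · calc (w a : ℝ) * cprod T w ≤ 1 * cprod T w :=
        mul_le_mul_of_nonneg_right (w a).2.2 (cprod_nonneg T w)
      _ = cprod T w := one_mul _
      _ ≤ cmin 1 T w := ih

lemma cmax_eq_one_sub_cmin (T : Finset (Fin d)) (u : Cube d) :
    cmax T (fun k => unitInterval.symm (u k)) = 1 - cmin 1 T u := by
  induction T using Finset.induction with
  | empty => simp [cmax, cmin_empty]
  | @insert a T ha ih =>
    rw [cmax_insert ha, cmin_insert ha, ih]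
    have : (unitInterval.symm (u a) : ℝ) = 1 - (u a : ℝ) := unitInterval.coe_symm_eq _
    rw [this]
    rcases le_total ((u a : ℝ)) (cmin 1 T u) with h | h
    · rw [min_eq_left h, max_eq_left (by linarith)]
    · rw [min_eq_right h, max_eq_right (by linarith)]


-- real helper identity
lemma max_key (ua va m M : ℝ) (h : ua ≤ va) :
    max (min va m - M) 0 - max (min ua m - M) 0 = max (min va m - max ua M) 0 := by
  simp only [min_def, max_def]
  split_ifs <;> linarith

lemma etaK_apply (K : Finset (Fin d)) (u v : Cube d) (k : Fin d) :
    etaK K u v k = if k ∈ K then v k else u k := rfl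

-- the `min`-block box sum
lemma boxSum_cmin (T : Finset (Fin d)) (u v : Cube d) (huv : u ≤ v) :
    ∀ c : ℝ, 0 ≤ c →
      ∑ K ∈ T.powerset, (-1 : ℝ) ^ (T.card - K.card) * cmin c T (etaK K u v)
        = max (cmin c T v - cmax T u) 0 := by
  induction T using Finset.induction with
  | empty =>
    intro c hc
    simp [cmin_empty, cmax, max_eq_left hc]
  | @insert a T ha ih =>
    intro c hc
    rw [Finset.sum_powerset_insert ha]
    have hcard : (insert a T).card = T.card + 1 := Finset.card_insert_of_notMem ha
    have h1 : ∀ K ∈ T.powerset,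
        (-1 : ℝ) ^ ((insert a T).card - K.card) * cmin c (insert a T) (etaK K u v)
          = -((-1 : ℝ) ^ (T.card - K.card) * cmin (min (u a : ℝ) c) T (etaK K u v)) := by
      intro K hK
      have hKT : K ⊆ T := Finset.mem_powerset.1 hK
      have haK : a ∉ K := fun h => ha (hKT h)
      have hKc : K.card ≤ T.card := Finset.card_le_card hKT
      have hexp : (insert a T).card - K.card = (T.card - K.card) + 1 := by omega
      rw [hexp, pow_succ, cmin_insert ha]
      have : etaK K u v a = u a := by simp [etaK_apply, haK]
      rw [this, min_cmin]
      ring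
    have h2 : ∀ K ∈ T.powerset,
        (-1 : ℝ) ^ ((insert a T).card - (insert a K).card) *
            cmin c (insert a T) (etaK (insert a K) u v)
          = (-1 : ℝ) ^ (T.card - K.card) * cmin (min (v a : ℝ) c) T (etaK K u v) := by
      intro K hK
      have hKT : K ⊆ T := Finset.mem_powerset.1 hK
      have haK : a ∉ K := fun h => ha (hKT h)
      have hexp : (insert a T).card - (insert a K).card = T.card - K.card := by
        rw [hcard, Finset.card_insert_of_notMem haK]
        omega
      rw [hexp, cmin_insert ha]
      have hA : etaK (insert a K) u v a = v a := by simp [etaK_apply]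
      rw [hA]
      have hcg : cmin c T (etaK (insert a K) u v) = cmin c T (etaK K u v) := by
        refine cmin_congr (fun k hk => ?_)
        have : k ≠ a := fun h => ha (h ▸ hk)
        simp [etaK_apply, Finset.mem_insert, this]
      rw [hcg, min_cmin]
    rw [Finset.sum_congr rfl h1, Finset.sum_congr rfl h2]
    rw [Finset.sum_neg_distrib]
    rw [ih (min (u a : ℝ) c) (le_min (u a).2.1 hc), ih (min (v a : ℝ) c) (le_min (v a).2.1 hc)]
    rw [← min_cmin, ← min_cmin, cmin_insert ha, cmax_insert ha]
    have := max_key (u a : ℝ) (v a : ℝ) (cmin c T v) (cmax T u) (huv a)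
    linarith


-- product-block box sum
lemma boxSum_prod (T : Finset (Fin d)) (u v : Cube d) :
    ∑ K ∈ T.powerset, (-1 : ℝ) ^ (T.card - K.card) * cprod T (etaK K u v)
      = ∏ k ∈ T, ((v k : ℝ) - (u k : ℝ)) := by
  have hrhs : ∏ k ∈ T, ((v k : ℝ) - (u k : ℝ)) = ∏ k ∈ T, ((v k : ℝ) + -(u k : ℝ)) := by
    refine Finset.prod_congr rfl (fun k _ => by ring)
  rw [hrhs, Finset.prod_add (fun k => (v k : ℝ)) (fun k => -(u k : ℝ)) T]
  refine Finset.sum_congr rfl (fun K hK => ?_)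
  have hKT : K ⊆ T := Finset.mem_powerset.1 hK
  have : cprod T (etaK K u v) = (∏ k ∈ K, (v k : ℝ)) * ∏ k ∈ T \ K, (u k : ℝ) := by
    have hsplit : ∏ k ∈ T, ((etaK K u v k : ℝ))
        = (∏ k ∈ K, ((etaK K u v k : ℝ))) * ∏ k ∈ T \ K, ((etaK K u v k : ℝ)) := by
      rw [← Finset.prod_union Finset.disjoint_sdiff, Finset.union_sdiff_of_subset hKT]
    rw [cprod, hsplit]
    congr 1
    · exact Finset.prod_congr rfl (fun k hk => by simp [etaK_apply, hk])
    · refine Finset.prod_congr rfl (fun k hk => ?_)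
      have : k ∉ K := (Finset.mem_sdiff.1 hk).2
      simp [etaK_apply, this]
  rw [this]
  have hneg : ∏ k ∈ T \ K, (-(u k : ℝ)) = (-1 : ℝ) ^ (T.card - K.card) * ∏ k ∈ T \ K, (u k : ℝ) := by
    have : ∀ k ∈ T \ K, (-(u k : ℝ)) = (-1 : ℝ) * (u k : ℝ) := fun k _ => by ring
    rw [Finset.prod_congr rfl this, Finset.prod_mul_distrib, Finset.prod_const,
      Finset.card_sdiff_of_subset hKT]
  rw [hneg]
  ring

-- factorization
lemma boxSum_factor (S T : Finset (Fin d)) (hST : Disjoint S T) (A B : Cube d → ℝ)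
    (hA : ∀ w w' : Cube d, (∀ k ∈ S, w k = w' k) → A w = A w')
    (hB : ∀ w w' : Cube d, (∀ k ∈ T, w k = w' k) → B w = B w') (u v : Cube d) :
    ∑ K ∈ (S ∪ T).powerset, (-1 : ℝ) ^ ((S ∪ T).card - K.card) * (A (etaK K u v) * B (etaK K u v))
      = (∑ K ∈ S.powerset, (-1 : ℝ) ^ (S.card - K.card) * A (etaK K u v)) *
        (∑ K ∈ T.powerset, (-1 : ℝ) ^ (T.card - K.card) * B (etaK K u v)) := by
  rw [Finset.sum_mul_sum, ← Finset.sum_product']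
  refine Finset.sum_nbij' (i := fun K => (K ∩ S, K ∩ T)) (j := fun p => p.1 ∪ p.2)
    ?_ ?_ ?_ ?_ ?_
  · intro K hK
    have hKU : K ⊆ S ∪ T := Finset.mem_powerset.1 hK
    simp only [Finset.mem_product, Finset.mem_powerset]
    exact ⟨Finset.inter_subset_right, Finset.inter_subset_right⟩
  · intro p hp
    simp only [Finset.mem_product, Finset.mem_powerset] at hp ⊢
    exact Finset.union_subset (hp.1.trans Finset.subset_union_left)
      (hp.2.trans Finset.subset_union_right)
  · intro K hK
    have hKU : K ⊆ S ∪ T := Finset.mem_powerset.1 hK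
    simp only
    rw [← Finset.inter_union_distrib_left]
    exact Finset.inter_eq_left.2 hKU
  · intro p hp
    simp only [Finset.mem_product, Finset.mem_powerset] at hp
    obtain ⟨h1, h2⟩ := hp
    have e1 : (p.1 ∪ p.2) ∩ S = p.1 := by
      ext x
      simp only [Finset.mem_inter, Finset.mem_union]
      constructor
      · rintro ⟨h | h, hS⟩
        · exact h
        · exact absurd hS (Finset.disjoint_right.1 hST (h2 h))
      · intro h; exact ⟨Or.inl h, h1 h⟩
    have e2 : (p.1 ∪ p.2) ∩ T = p.2 := by
      ext x
      simp only [Finset.mem_inter, Finset.mem_union]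
      constructor
      · rintro ⟨h | h, hT⟩
        · exact absurd hT (Finset.disjoint_left.1 hST (h1 h))
        · exact h
      · intro h; exact ⟨Or.inr h, h2 h⟩
    simp [e1, e2]
  · intro K hK
    have hKU : K ⊆ S ∪ T := Finset.mem_powerset.1 hK
    have hAeq : A (etaK K u v) = A (etaK (K ∩ S) u v) := by
      refine hA _ _ (fun k hk => ?_)
      simp [etaK_apply, Finset.mem_inter, hk]
    have hBeq : B (etaK K u v) = B (etaK (K ∩ T) u v) := by
      refine hB _ _ (fun k hk => ?_)
      simp [etaK_apply, Finset.mem_inter, hk]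
    have hcard : K.card = (K ∩ S).card + (K ∩ T).card := by
      rw [← Finset.card_union_of_disjoint
        (Finset.disjoint_of_subset_left Finset.inter_subset_right
          (Finset.disjoint_of_subset_right Finset.inter_subset_right hST))]
      rw [← Finset.inter_union_distrib_left]
      rw [Finset.inter_eq_left.2 hKU]
    have hcS : (K ∩ S).card ≤ S.card := Finset.card_le_card Finset.inter_subset_right
    have hcT : (K ∩ T).card ≤ T.card := Finset.card_le_card Finset.inter_subset_right
    have hexp : (S ∪ T).card - K.card = (S.card - (K ∩ S).card) + (T.card - (K ∩ T).card) := by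
      rw [Finset.card_union_of_disjoint hST]
      omega
    rw [hexp, pow_add, hAeq, hBeq]
    ring


lemma W2_nonneg (a b : ℝ) : 0 ≤ W2 a b := le_max_right _ _

lemma W2_box_nonneg (a0 a1 b0 b1 : ℝ) (h0 : a0 ≤ b0) (h1 : a1 ≤ b1) :
    0 ≤ W2 b0 b1 - W2 a0 b1 - W2 b0 a1 + W2 a0 a1 := by
  simp only [W2, max_def]
  split_ifs <;> linarith

lemma W2_survival (a b : ℝ) (ha0 : 0 ≤ a) (ha1 : a ≤ 1) (hb0 : 0 ≤ b) (hb1 : b ≤ 1) :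
    W2 1 1 - W2 (1 - a) 1 - W2 1 (1 - b) + W2 (1 - a) (1 - b) = W2 a b := by
  simp only [W2, max_def]
  split_ifs <;> linarith

lemma boxSum_W (i0 i1 : Fin d) (hne : i0 ≠ i1) (u v : Cube d) :
    ∑ K ∈ ({i0, i1} : Finset (Fin d)).powerset,
        (-1 : ℝ) ^ (({i0, i1} : Finset (Fin d)).card - K.card) *
          W2 ((etaK K u v) i0 : ℝ) ((etaK K u v) i1 : ℝ)
      = W2 (v i0) (v i1) - W2 (u i0) (v i1) - W2 (v i0) (u i1) + W2 (u i0) (u i1) := by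
  have h1 : i0 ∉ ({i1} : Finset (Fin d)) := by simp [hne]
  have hcard : ({i0, i1} : Finset (Fin d)).card = 2 := by
    rw [Finset.card_insert_of_notMem h1, Finset.card_singleton]
  rw [show ({i0, i1} : Finset (Fin d)) = insert i0 {i1} from rfl,
    Finset.sum_powerset_insert h1]
  rw [show ({i1} : Finset (Fin d)) = insert i1 ∅ from rfl,
    Finset.sum_powerset_insert (Finset.notMem_empty i1),
    Finset.sum_powerset_insert (Finset.notMem_empty i1)]
  simp only [Finset.powerset_empty, Finset.sum_singleton]
  have e00 : etaK (∅ : Finset (Fin d)) u v = u := by funext k; simp [etaK_apply]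
  have e1 : (etaK {i1} u v) i0 = u i0 := by simp [etaK_apply, hne]
  have e1' : (etaK {i1} u v) i1 = v i1 := by simp [etaK_apply]
  have e0 : (etaK {i0} u v) i0 = v i0 := by simp [etaK_apply]
  have e0' : (etaK {i0} u v) i1 = u i1 := by
    have : i1 ≠ i0 := hne.symm
    simp [etaK_apply, this]
  have e01 : (etaK {i0, i1} u v) i0 = v i0 := by simp [etaK_apply]
  have e01' : (etaK {i0, i1} u v) i1 = v i1 := by simp [etaK_apply]
  have c0 : (∅ : Finset (Fin d)).card = 0 := rfl
  have c1 : ({i1} : Finset (Fin d)).card = 1 := Finset.card_singleton _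
  have c1' : ({i0} : Finset (Fin d)).card = 1 := Finset.card_singleton _
  rw [show insert i1 (∅ : Finset (Fin d)) = {i1} from rfl,
    show insert i0 (∅ : Finset (Fin d)) = {i0} from rfl,
    show insert i0 ({i1} : Finset (Fin d)) = {i0, i1} from rfl]
  rw [e00, e1, e1', e0, e0', e01, e01']
  rw [show insert i0 ({i1} : Finset (Fin d)) = {i0, i1} from rfl] at hcard ⊢
  rw [hcard, c0, c1, c1']
  norm_num
  ring

lemma survival_eq (F : Cube d → ℝ) (u : Cube d) :
    survival F u = ∑ K ∈ (Finset.univ : Finset (Fin d)).powerset,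
      (-1 : ℝ) ^ (d - K.card) * F (etaK K (fun k => unitInterval.symm (u k)) 1) := by
  rw [survival, nuK, Finset.powerset_univ]
  refine Fintype.sum_bijective compl compl_involutive.bijective _ _ (fun L => ?_)
  have hLc : L.card ≤ d := by
    have := Finset.card_le_univ L
    simpa using this
  congr 1
  · rw [Finset.card_compl, Fintype.card_fin]
    congr 1
    omega
  · congr 1
    funext k
    by_cases hk : k ∈ L
    · simp [etaK_apply, hk, Finset.mem_compl]
    · simp [etaK_apply, hk, Finset.mem_compl]


-- change survival_eq to Fintype sum form is already powerset; add master lemma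
theorem master {d : ℕ} (i0 i1 : Fin d) (hne : i0 ≠ i1)
    (C D : Cube d → ℝ)
    (hC : ∀ w : Cube d, C w = W2 (w i0) (w i1) * cprod (({i0, i1} : Finset (Fin d))ᶜ) w)
    (hD : ∀ w : Cube d, D w = W2 (w i0) (w i1) * cmin 1 (({i0, i1} : Finset (Fin d))ᶜ) w) :
    IsCopula C ∧ IsCopula D ∧ IsTauCM D ∧ ConcLE C D := by
  set S : Finset (Fin d) := {i0, i1} with hS
  set T : Finset (Fin d) := Sᶜ with hT
  set A : Cube d → ℝ := fun w => W2 (w i0) (w i1) with hA_def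
  have hi0S : i0 ∈ S := Finset.mem_insert_self _ _
  have hi1S : i1 ∈ S := Finset.mem_insert_of_mem (Finset.mem_singleton_self _)
  have hA : ∀ w w' : Cube d, (∀ k ∈ S, w k = w' k) → A w = A w' := by
    intro w w' h
    simp only [hA_def, h i0 hi0S, h i1 hi1S]
  have hBprod : ∀ w w' : Cube d, (∀ k ∈ T, w k = w' k) → cprod T w = cprod T w' :=
    fun w w' h => cprod_congr h
  have hBmin : ∀ w w' : Cube d, (∀ k ∈ T, w k = w' k) → cmin 1 T w = cmin 1 T w' :=
    fun w w' h => cmin_congr h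
  have total : ∀ (B : Cube d → ℝ), (∀ w w' : Cube d, (∀ k ∈ T, w k = w' k) → B w = B w') →
      ∀ u v : Cube d,
      ∑ K : Finset (Fin d), (-1 : ℝ) ^ (d - K.card) * (A (etaK K u v) * B (etaK K u v))
        = (∑ K ∈ S.powerset, (-1 : ℝ) ^ (S.card - K.card) * A (etaK K u v)) *
          (∑ K ∈ T.powerset, (-1 : ℝ) ^ (T.card - K.card) * B (etaK K u v)) := by
    intro B hB u v
    have hfac := boxSum_factor S T disjoint_compl_right A B hA hB u v
    rw [Finset.union_compl, Finset.powerset_univ, Finset.card_univ, Fintype.card_fin] at hfac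
    exact hfac
  -- the W-block box sum
  have Wblock : ∀ u v : Cube d,
      ∑ K ∈ S.powerset, (-1 : ℝ) ^ (S.card - K.card) * A (etaK K u v)
        = W2 (v i0) (v i1) - W2 (u i0) (v i1) - W2 (v i0) (u i1) + W2 (u i0) (u i1) :=
    fun u v => boxSum_W i0 i1 hne u v
  -- survival formulas
  have one_apply : ∀ k : Fin d, ((1 : Cube d) k : ℝ) = 1 := fun k => rfl
  have survC : ∀ u : Cube d, survival C u = W2 (u i0) (u i1) * cprod T u := by
    intro u
    rw [survival_eq]
    have hcong : ∀ K ∈ (Finset.univ : Finset (Fin d)).powerset,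
        (-1 : ℝ) ^ (d - K.card) * C (etaK K (fun k => unitInterval.symm (u k)) 1)
          = (-1 : ℝ) ^ (d - K.card) *
            (A (etaK K (fun k => unitInterval.symm (u k)) 1) *
              cprod T (etaK K (fun k => unitInterval.symm (u k)) 1)) := by
      intro K _
      rw [hC]
    rw [Finset.sum_congr rfl hcong, Finset.powerset_univ]
    rw [total (cprod T) hBprod]
    rw [Wblock, boxSum_prod]
    have hW : W2 ((1 : Cube d) i0) ((1 : Cube d) i1)
        - W2 ((unitInterval.symm (u i0) : ℝ)) ((1 : Cube d) i1)
        - W2 ((1 : Cube d) i0) ((unitInterval.symm (u i1) : ℝ))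
        + W2 ((unitInterval.symm (u i0) : ℝ)) ((unitInterval.symm (u i1) : ℝ))
        = W2 (u i0) (u i1) := by
      rw [one_apply, one_apply, unitInterval.coe_symm_eq, unitInterval.coe_symm_eq]
      exact W2_survival _ _ (u i0).2.1 (u i0).2.2 (u i1).2.1 (u i1).2.2
    rw [hW]
    congr 1
    rw [cprod]
    refine Finset.prod_congr rfl (fun k _ => ?_)
    rw [one_apply, unitInterval.coe_symm_eq]
    ring
  have symm_le_one : ∀ u : Cube d, (fun k => unitInterval.symm (u k)) ≤ (1 : Cube d) :=
    fun u k => unitInterval.le_one'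
  have cmin_one_one : cmin 1 T (1 : Cube d) = 1 :=
    le_antisymm (cmin_le_init _ _ _) (le_cmin le_rfl (fun k _ => le_of_eq (one_apply k).symm))
  have survD : ∀ u : Cube d, survival D u = W2 (u i0) (u i1) * cmin 1 T u := by
    intro u
    rw [survival_eq]
    have hcong : ∀ K ∈ (Finset.univ : Finset (Fin d)).powerset,
        (-1 : ℝ) ^ (d - K.card) * D (etaK K (fun k => unitInterval.symm (u k)) 1)
          = (-1 : ℝ) ^ (d - K.card) *
            (A (etaK K (fun k => unitInterval.symm (u k)) 1) *
              cmin 1 T (etaK K (fun k => unitInterval.symm (u k)) 1)) := by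
      intro K _
      rw [hD]
    rw [Finset.sum_congr rfl hcong, Finset.powerset_univ]
    rw [total (cmin 1 T) hBmin]
    rw [Wblock, boxSum_cmin T _ _ (symm_le_one u) 1 zero_le_one]
    have hW : W2 ((1 : Cube d) i0) ((1 : Cube d) i1)
        - W2 ((unitInterval.symm (u i0) : ℝ)) ((1 : Cube d) i1)
        - W2 ((1 : Cube d) i0) ((unitInterval.symm (u i1) : ℝ))
        + W2 ((unitInterval.symm (u i0) : ℝ)) ((unitInterval.symm (u i1) : ℝ))
        = W2 (u i0) (u i1) := by
      rw [one_apply, one_apply, unitInterval.coe_symm_eq, unitInterval.coe_symm_eq]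
      exact W2_survival _ _ (u i0).2.1 (u i0).2.2 (u i1).2.1 (u i1).2.2
    rw [hW, cmin_one_one, cmax_eq_one_sub_cmin]
    have h0 : 0 ≤ cmin 1 T u := cmin_nonneg zero_le_one T u
    have : (1 : ℝ) - (1 - cmin 1 T u) = cmin 1 T u := by ring
    rw [this, max_eq_left h0]
  -- condition (i)
  have rect : ∀ (B : Cube d → ℝ), (∀ w w' : Cube d, (∀ k ∈ T, w k = w' k) → B w = B w') →
      (∀ u v : Cube d, u ≤ v →
        0 ≤ ∑ K ∈ T.powerset, (-1 : ℝ) ^ (T.card - K.card) * B (etaK K u v)) →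
      ∀ u v : Cube d, u ≤ v →
        0 ≤ ∑ K : Finset (Fin d), (-1 : ℝ) ^ (d - K.card) * (A (etaK K u v) * B (etaK K u v)) := by
    intro B hB hpos u v huv
    rw [total B hB]
    refine mul_nonneg ?_ (hpos u v huv)
    rw [Wblock]
    exact W2_box_nonneg _ _ _ _ (huv i0) (huv i1)
  -- boundary conditions, packaged
  have etaK0 : ∀ (k : Fin d) (u : Cube d) (j : Fin d),
      etaK {k} u 0 j = if j = k then 0 else u j := by
    intro k u j
    simp [etaK_apply, Finset.mem_singleton]
  have etaK1 : ∀ (k : Fin d) (u : Cube d) (j : Fin d),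
      etaK {k} 1 u j = if j = k then u j else 1 := by
    intro k u j
    by_cases h : j = k <;> simp [etaK_apply, Finset.mem_singleton, h]
  have zero_coe : ((0 : unitInterval) : ℝ) = 0 := rfl
  have one_coe : ((1 : unitInterval) : ℝ) = 1 := rfl
  have hAzero : ∀ (k : Fin d) (u : Cube d), k ∈ S →
      W2 ((etaK {k} u 0 i0 : ℝ)) ((etaK {k} u 0 i1 : ℝ)) = 0 := by
    intro k u hk
    have hk' : k = i0 ∨ k = i1 := by
      rcases Finset.mem_insert.1 hk with h | h
      · exact Or.inl h
      · exact Or.inr (Finset.mem_singleton.1 h)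
    have b0 : ((etaK {k} u 0 i0 : ℝ)) ≤ 1 := (etaK {k} u 0 i0).2.2
    have b1 : ((etaK {k} u 0 i1 : ℝ)) ≤ 1 := (etaK {k} u 0 i1).2.2
    rcases hk' with h | h
    · subst h
      have : etaK {k} u 0 k = 0 := by rw [etaK0]; simp
      simp only [this, zero_coe, W2]
      rw [max_eq_right (by linarith)]
    · subst h
      have : etaK {k} u 0 k = 0 := by rw [etaK0]; simp
      simp only [this, zero_coe, W2]
      rw [max_eq_right (by linarith)]
  have hA1 : ∀ (k : Fin d) (u : Cube d), k ∈ T →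
      W2 ((etaK {k} 1 u i0 : ℝ)) ((etaK {k} 1 u i1 : ℝ)) = 1 := by
    intro k u hk
    have h0 : i0 ≠ k := fun h => (Finset.mem_compl.1 hk) (h ▸ hi0S)
    have h1 : i1 ≠ k := fun h => (Finset.mem_compl.1 hk) (h ▸ hi1S)
    rw [etaK1, etaK1, if_neg h0, if_neg h1, one_coe]
    simp only [W2]
    rw [max_eq_left (by norm_num)]
    norm_num
  have hA1' : ∀ (k : Fin d) (u : Cube d), k ∈ S →
      W2 ((etaK {k} 1 u i0 : ℝ)) ((etaK {k} 1 u i1 : ℝ)) = (u k : ℝ) := by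
    intro k u hk
    have hk' : k = i0 ∨ k = i1 := by
      rcases Finset.mem_insert.1 hk with h | h
      · exact Or.inl h
      · exact Or.inr (Finset.mem_singleton.1 h)
    rcases hk' with h | h
    · subst h
      have hio : i1 ≠ k := fun hh => hne hh.symm
      rw [etaK1, etaK1, if_pos rfl, if_neg hio, one_coe]
      simp only [W2]
      rw [max_eq_left (by have := (u k).2.1; linarith)]
      ring
    · subst h
      have hio : i0 ≠ k := hne
      rw [etaK1, etaK1, if_neg hio, if_pos rfl, one_coe]
      simp only [W2]
      rw [max_eq_left (by have := (u k).2.1; linarith)]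
      ring
  have copC : IsCopula C := by
    refine ⟨?_, ?_, ?_⟩
    · intro u v huv
      have hcong : ∀ K ∈ (Finset.univ : Finset (Finset (Fin d))),
          (-1 : ℝ) ^ (d - K.card) * C (etaK K u v)
            = (-1 : ℝ) ^ (d - K.card) * (A (etaK K u v) * cprod T (etaK K u v)) := by
        intro K _; rw [hC]
      rw [Finset.sum_congr rfl hcong]
      refine rect (cprod T) hBprod ?_ u v huv
      intro u' v' huv'
      rw [boxSum_prod]
      exact Finset.prod_nonneg (fun k _ => by have := huv' k; simp only [sub_nonneg]; exact this)
    · intro k u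
      rw [hC]
      by_cases hk : k ∈ S
      · rw [hAzero k u hk, zero_mul]
      · have hkT : k ∈ T := Finset.mem_compl.2 hk
        have : cprod T (etaK {k} u 0) = 0 := by
          refine Finset.prod_eq_zero hkT ?_
          rw [etaK0]; simp [zero_coe]
        rw [this, mul_zero]
    · intro k u
      rw [hC]
      by_cases hk : k ∈ S
      · rw [hA1' k u hk]
        have : cprod T (etaK {k} 1 u) = 1 := by
          refine Finset.prod_eq_one (fun j hj => ?_)
          have : j ≠ k := fun h => (Finset.mem_compl.1 hj) (h ▸ hk)
          rw [etaK1, if_neg this, one_coe]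
        rw [this, mul_one]
      · have hkT : k ∈ T := Finset.mem_compl.2 hk
        rw [hA1 k u hkT, one_mul]
        rw [cprod]
        refine Finset.prod_eq_single k (fun j hj hjk => ?_) (fun h => absurd hkT h)
          |>.trans ?_
        · rw [etaK1, if_neg hjk, one_coe]
        · rw [etaK1, if_pos rfl]
  have copD : IsCopula D := by
    refine ⟨?_, ?_, ?_⟩
    · intro u v huv
      have hcong : ∀ K ∈ (Finset.univ : Finset (Finset (Fin d))),
          (-1 : ℝ) ^ (d - K.card) * D (etaK K u v)
            = (-1 : ℝ) ^ (d - K.card) * (A (etaK K u v) * cmin 1 T (etaK K u v)) := by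
        intro K _; rw [hD]
      rw [Finset.sum_congr rfl hcong]
      refine rect (cmin 1 T) hBmin ?_ u v huv
      intro u' v' huv'
      rw [boxSum_cmin T u' v' huv' 1 zero_le_one]
      exact le_max_right _ _
    · intro k u
      rw [hD]
      by_cases hk : k ∈ S
      · rw [hAzero k u hk, zero_mul]
      · have hkT : k ∈ T := Finset.mem_compl.2 hk
        have hle : cmin 1 T (etaK {k} u 0) ≤ 0 := by
          have := cmin_le (c := 1) (w := etaK {k} u 0) hkT
          rw [etaK0] at this; simpa [zero_coe] using this
        have hge : 0 ≤ cmin 1 T (etaK {k} u 0) := cmin_nonneg zero_le_one _ _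
        rw [le_antisymm hle hge, mul_zero]
    · intro k u
      rw [hD]
      by_cases hk : k ∈ S
      · rw [hA1' k u hk]
        have : cmin 1 T (etaK {k} 1 u) = 1 := by
          refine le_antisymm (cmin_le_init _ _ _) (le_cmin le_rfl (fun j hj => ?_))
          have : j ≠ k := fun h => (Finset.mem_compl.1 hj) (h ▸ hk)
          rw [etaK1, if_neg this, one_coe]
        rw [this, mul_one]
      · have hkT : k ∈ T := Finset.mem_compl.2 hk
        rw [hA1 k u hkT, one_mul]
        have hwk : etaK {k} 1 u k = u k := by rw [etaK1, if_pos rfl]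
        refine le_antisymm ?_ ?_
        · have := cmin_le (c := 1) (w := etaK {k} 1 u) hkT
          rwa [hwk] at this
        · refine le_cmin (u k).2.2 (fun j hj => ?_)
          by_cases hjk : j = k
          · subst hjk; rw [hwk]
          · rw [etaK1, if_neg hjk, one_coe]; exact (u k).2.2
  have concle : ConcLE C D := by
    constructor
    · intro u
      rw [hC, hD]
      exact mul_le_mul_of_nonneg_left (cprod_le_cmin T u) (W2_nonneg _ _)
    · intro u
      rw [survC, survD]
      exact mul_le_mul_of_nonneg_left (cprod_le_cmin T u) (W2_nonneg _ _)
  have tauD : IsTauCM D := by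
    intro u _
    have hDnn : 0 ≤ D u := by
      rw [hD]; exact mul_nonneg (W2_nonneg _ _) (cmin_nonneg zero_le_one _ _)
    have hSnn : 0 ≤ survival D (fun k => unitInterval.symm (u k)) := by
      rw [survD]
      exact mul_nonneg (W2_nonneg _ _) (cmin_nonneg zero_le_one _ _)
    rcases le_total ((u i0 : ℝ) + (u i1 : ℝ)) 1 with h | h
    · have : D u = 0 := by
        rw [hD, W2, max_eq_right (by linarith), zero_mul]
      rw [this, min_eq_left hSnn]
    · have : survival D (fun k => unitInterval.symm (u k)) = 0 := by
        rw [survD, W2, unitInterval.coe_symm_eq, unitInterval.coe_symm_eq,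
          max_eq_right (by linarith), zero_mul]
      rw [this, min_eq_right hDnn]
  exact ⟨copC, copD, tauD, concle⟩


end Aux9


/-- For `d ≥ 4`, `C(u,v) = W(u₁,u₂)·∏ vᵢ` and `D(u,v) = W(u₁,u₂)·min vᵢ` are copulas, `D` is
Kendall-countermonotonic, and `C ⪯ D` with `C ≠ D`; in particular `D` is a `τ`-CM copula
which is not minimal. -/
theorem stmt9 (d : ℕ) (hd : 4 ≤ d)
    (C D : Cube d → ℝ)
    (hC : ∀ u : Cube d, C u =
      max ((u ⟨0, by omega⟩ : ℝ) + (u ⟨1, by omega⟩ : ℝ) - 1) 0 *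
      ∏ j : Fin (d - 2), (u (Fin.cast (by omega) (Fin.natAdd 2 j)) : ℝ))
    (hD : ∀ u : Cube d, D u =
      max ((u ⟨0, by omega⟩ : ℝ) + (u ⟨1, by omega⟩ : ℝ) - 1) 0 *
      sInf (Set.range fun j : Fin (d - 2) => (u (Fin.cast (by omega) (Fin.natAdd 2 j)) : ℝ))) :
    IsCopula C ∧ IsCopula D ∧ IsTauCM D ∧ ConcLE C D ∧ C ≠ D ∧ ¬ IsMinimalCopula D := by
  have hne : (⟨0, by omega⟩ : Fin d) ≠ ⟨1, by omega⟩ := by simp [Fin.ext_iff]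
  set i0 : Fin d := ⟨0, by omega⟩ with hi0
  set i1 : Fin d := ⟨1, by omega⟩ with hi1
  set S : Finset (Fin d) := {i0, i1} with hS
  have hdd : 2 + (d - 2) = d := by omega
  set e : Fin (d - 2) → Fin d := fun j => Fin.cast hdd (Fin.natAdd 2 j) with he
  have he_val : ∀ j, (e j).1 = 2 + j.1 := fun j => rfl
  have he_inj : Function.Injective e := by
    intro a b h
    have h2 := congrArg Fin.val h
    rw [he_val, he_val] at h2
    exact Fin.ext (by omega)
  have hmemS : ∀ k : Fin d, k ∈ S ↔ (k.1 = 0 ∨ k.1 = 1) := by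
    intro k
    simp only [hS, Finset.mem_insert, Finset.mem_singleton, Fin.ext_iff, hi0, hi1]
  have himage : Finset.univ.image e = Sᶜ := by
    ext k
    simp only [Finset.mem_image, Finset.mem_univ, true_and, Finset.mem_compl]
    rw [hmemS]
    constructor
    · rintro ⟨j, rfl⟩
      rw [he_val]
      omega
    · intro h
      push_neg at h
      refine ⟨⟨k.1 - 2, by omega⟩, Fin.ext ?_⟩
      rw [he_val]
      simp only
      omega
  have hprod : ∀ w : Cube d, Aux9.cprod Sᶜ w = ∏ j : Fin (d - 2), (w (e j) : ℝ) := by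
    intro w
    rw [Aux9.cprod, ← himage, Finset.prod_image (fun a _ b _ h => he_inj h)]
  have hd2pos : 0 < d - 2 := by omega
  have hmin : ∀ w : Cube d,
      sInf (Set.range fun j : Fin (d - 2) => (w (e j) : ℝ)) = Aux9.cmin 1 Sᶜ w := by
    intro w
    have hbdd : BddBelow (Set.range fun j : Fin (d - 2) => (w (e j) : ℝ)) :=
      (Set.finite_range _).bddBelow
    have hne' : (Set.range fun j : Fin (d - 2) => (w (e j) : ℝ)).Nonempty :=
      ⟨_, ⟨⟨0, hd2pos⟩, rfl⟩⟩
    refine le_antisymm ?_ ?_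
    · refine Aux9.le_cmin ?_ (fun k hk => ?_)
      · exact (csInf_le hbdd ⟨⟨0, hd2pos⟩, rfl⟩).trans (w (e ⟨0, hd2pos⟩)).2.2
      · rw [← himage] at hk
        obtain ⟨j, -, rfl⟩ := Finset.mem_image.1 hk
        exact csInf_le hbdd ⟨j, rfl⟩
    · refine le_csInf hne' ?_
      rintro b ⟨j, rfl⟩
      refine Aux9.cmin_le ?_
      rw [← himage]
      exact Finset.mem_image_of_mem e (Finset.mem_univ j)
  have hC' : ∀ w : Cube d, C w = Aux9.W2 (w i0) (w i1) * Aux9.cprod Sᶜ w := by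
    intro w
    rw [hC w, hprod w]
    rfl
  have hD' : ∀ w : Cube d, D w = Aux9.W2 (w i0) (w i1) * Aux9.cmin 1 Sᶜ w := by
    intro w
    rw [hD w, hmin w]
    rfl
  obtain ⟨cop1, cop2, tau, conc⟩ := Aux9.master i0 i1 hne C D hC' hD'
  have hhalf : (0 : ℝ) ≤ 1/2 ∧ (1/2 : ℝ) ≤ 1 := by norm_num
  have hCD : C ≠ D := by
    intro h
    set half : unitInterval := ⟨1/2, by norm_num⟩ with hhalfdef
    set u0 : Cube d := fun k => if k.1 < 2 then 1 else half with hu0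
    have e0 : (u0 i0 : ℝ) = 1 := by
      simp only [hu0, hi0]
      norm_num
    have e1 : (u0 i1 : ℝ) = 1 := by
      simp only [hu0, hi1]
      norm_num
    have ej : ∀ j : Fin (d - 2), (u0 (e j) : ℝ) = 1/2 := by
      intro j
      have : ¬ ((e j).1 < 2) := by rw [he_val]; omega
      simp only [hu0, if_neg this, hhalfdef]
    have hCu : C u0 = (1/2 : ℝ) ^ (d - 2) := by
      rw [hC' u0, hprod u0]
      have : (∏ j : Fin (d - 2), (u0 (e j) : ℝ)) = (1/2 : ℝ) ^ (d - 2) := by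
        rw [Finset.prod_congr rfl (fun j _ => ej j), Finset.prod_const, Finset.card_univ,
          Fintype.card_fin]
      rw [this]
      simp only [Aux9.W2, e0, e1]
      rw [max_eq_left (by norm_num)]
      norm_num
    have hDu : D u0 = 1/2 := by
      rw [hD' u0]
      have hle : Aux9.cmin 1 Sᶜ u0 = 1/2 := by
        rw [← hmin u0]
        have : (fun j : Fin (d - 2) => (u0 (e j) : ℝ)) = fun _ => (1/2 : ℝ) :=
          funext (fun j => ej j)
        rw [this]
        have hinst : Nonempty (Fin (d - 2)) := ⟨⟨0, hd2pos⟩⟩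
        have hrange : Set.range (fun _ : Fin (d - 2) => (1/2 : ℝ)) = {(1/2 : ℝ)} :=
          Set.range_const
        rw [hrange, csInf_singleton]
      rw [hle]
      simp only [Aux9.W2, e0, e1]
      rw [max_eq_left (by norm_num)]
      norm_num
    rw [h, hDu] at hCu
    have hlt : (1/2 : ℝ) ^ (d - 2) < 1/2 := by
      have h2 : (1/2 : ℝ) ^ (d - 2) ≤ (1/2 : ℝ) ^ 2 :=
        pow_le_pow_of_le_one (by norm_num) (by norm_num) (by omega)
      norm_num at h2
      linarith
    rw [← hCu] at hlt
    linarith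
  refine ⟨cop1, cop2, tau, conc, hCD, ?_⟩
  rintro ⟨-, hminimal⟩
  exact hCD (hminimal C cop1 conc)
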